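/- Trivalent characterization of certainty preservation (Proposition 1, single-premise, semantic-set form): Let A, B be functions assigning to each world w ∈ W a truth value in {0,1/2,1}. Then the following are equivalent: (i) for every probability mass function c on the finite set W, if p_c(A)=1 then p_c(B)=1; (ii) for every w ∈ W, if A(w) ≥ 1/2 then B(w) ≥ 1/2 (equivalently, {w : B(w)=0} ⊆ {w : A(w)=0}). -/
import Mathlib


/-- The set of trivalent truth values {0, 1/2, 1} inside ℚ. -/
def Tri (x : ℚ) : Prop := x = 0 ∨ x = 1/2 ∨ x = 1

/-- Cooper conditional: f→(0,y)=1/2, f→(1,y)=y, f→(1/2,y)=y (on trivalent values). -/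
def tcond (a b : ℚ) : ℚ := if a = 0 then 1/2 else b

/-- Quasi-conjunction. -/
def tand (a b : ℚ) : ℚ :=
  if a = 0 ∨ b = 0 then 0 else if a = 1 ∨ b = 1 then 1 else 1/2

/-- Quasi-disjunction. -/
def tor (a b : ℚ) : ℚ :=
  if a = 1 ∨ b = 1 then 1 else if a = 0 ∨ b = 0 then 0 else 1/2

/-- Strong Kleene negation. -/
def tneg (a : ℚ) : ℚ := 1 - a

open Finset in
/-- Weight of the worlds where the assignment `v` takes the value `x`. -/
def wt {W : Type*} [Fintype W] (c : W → ℝ) (v : W → ℚ) (x : ℚ) : ℝ :=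
  ∑ w ∈ Finset.univ.filter (fun w => v w = x), c w

/-- Trivalent probability of a truth assignment. -/
noncomputable def pv {W : Type*} [Fintype W] (c : W → ℝ) (v : W → ℚ) : ℝ :=
  if 0 < wt c v 1 + wt c v 0 then wt c v 1 / (wt c v 1 + wt c v 0) else 1

lemma wt_nonneg {W : Type*} [Fintype W] (c : W → ℝ) (hc : ∀ w, 0 ≤ c w)
    (v : W → ℚ) (x : ℚ) : 0 ≤ wt c v x :=
  Finset.sum_nonneg fun w _ => hc w

/-- Trivalent characterization of certainty-preserving inference (single premise). -/
theorem certainty_preservation_characterization {W : Type*} [Fintype W] [Nonempty W]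
    (A B : W → ℚ) (hA : ∀ w, Tri (A w)) (hB : ∀ w, Tri (B w)) :
    (∀ c : W → ℝ, (∀ w, 0 ≤ c w) → (∑ w, c w) = 1 →
        pv c A = 1 → pv c B = 1) ↔
      (∀ w, 1/2 ≤ A w → 1/2 ≤ B w) := by
  classical
  constructor
  · intro h w0 hAw
    by_contra hBw
    -- B w0 = 0
    have hB0 : B w0 = 0 := by
      rcases hB w0 with h0 | h0 | h0 <;> simp [h0] at hBw ⊢ <;> linarith
    have hA0 : A w0 ≠ 0 := by
      intro h0; rw [h0] at hAw; linarith
    set c : W → ℝ := fun w => if w = w0 then 1 else 0 with hc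
    have hcnn : ∀ w, 0 ≤ c w := by intro w; simp [hc]; split <;> norm_num
    have hsum : (∑ w, c w) = 1 := by simp [hc]
    -- wt formula
    have hwt : ∀ (v : W → ℚ) (x : ℚ), wt c v x = if v w0 = x then 1 else 0 := by
      intro v x
      simp [wt, hc, Finset.sum_ite_eq']
    have hpvA : pv c A = 1 := by
      rw [pv, hwt, hwt]
      rcases hA w0 with h0 | h0 | h0
      · exact absurd h0 hA0
      · norm_num [h0]
      · norm_num [h0]
    have hpvB := h c hcnn hsum hpvA
    rw [pv, hwt, hwt] at hpvB
    have hB1 : B w0 ≠ 1 := by rw [hB0]; norm_num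
    simp [hB0, hB1] at hpvB
  · intro h c hc hsum hpA
    -- pv c A = 1 implies wt c A 0 = 0
    have hwA0 : wt c A 0 = 0 := by
      rw [pv] at hpA
      split at hpA
      · rename_i hpos
        have hne : wt c A 1 + wt c A 0 ≠ 0 := ne_of_gt hpos
        field_simp at hpA
        linarith
      · rename_i hnpos
        have h1 := wt_nonneg c hc A 1
        have h0 := wt_nonneg c hc A 0
        push_neg at hnpos
        linarith
    -- each world with A w = 0 has c w = 0
    have hcw : ∀ w, A w = 0 → c w = 0 := by
      intro w hw
      have := (Finset.sum_eq_zero_iff_of_nonneg (fun w _ => hc w)).mp hwA0 w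
        (by simp [hw])
      exact this
    have hwB0 : wt c B 0 = 0 := by
      apply Finset.sum_eq_zero
      intro w hw
      simp only [Finset.mem_filter] at hw
      apply hcw
      have hBw : B w = 0 := hw.2
      rcases hA w with h0 | h0 | h0
      · exact h0
      · exfalso; have := h w (by rw [h0]); rw [hBw] at this; linarith
      · exfalso; have := h w (by rw [h0]; norm_num); rw [hBw] at this; linarith
    rw [pv, hwB0]
    split
    · rename_i hpos
      rw [add_zero] at hpos ⊢
      field_simp
    · rfl
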